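/- Let V be a real inner product space, let B : V × V → ℝ be a bilinear map, and let C_B ≥ 0 satisfy |B(v, w)| ≤ C_B ‖v‖ ‖w‖ for all v, w ∈ V. Let S ⊆ V be a subspace, let M : V → ℝ be continuously Fréchet differentiable, and let u, u_h, z ∈ V and z_h ∈ S satisfy: (i) Galerkin orthogonality B(u − u_h, v) = 0 for all v ∈ S, and (ii) the dual problem B(v, z) = ∫₀¹ DM(u + θ(u_h − u))(v) dθ for all v ∈ V, where DM(w) denotes the Fréchet derivative of M at w. Then |M(u) − M(u_h)| ≤ C_B ‖u − u_h‖ ‖z − z_h‖. -/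

import Mathlib

/-- Abstract duality bound for a continuously Fréchet differentiable (possibly
nonlinear) output functional of a Galerkin approximation, where the dual problem
has the averaged derivative of `M` along the segment from `u` to `u_h` as
right-hand side. -/
theorem duality_bound_frechet_functional
    {V : Type*} [NormedAddCommGroup V] [InnerProductSpace ℝ V]
    (B : V →ₗ[ℝ] V →ₗ[ℝ] ℝ) (C_B : ℝ) (hC : 0 ≤ C_B)
    (hB : ∀ v w : V, |B v w| ≤ C_B * ‖v‖ * ‖w‖)
    (S : Submodule ℝ V) (M : V → ℝ) (hM : ContDiff ℝ 1 M)
    (u u_h z z_h : V) (hz_h : z_h ∈ S)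
    (hGal : ∀ v ∈ S, B (u - u_h) v = 0)
    (hdual : ∀ v : V, B v z = ∫ θ in (0:ℝ)..1, fderiv ℝ M (u + θ • (u_h - u)) v) :
    |M u - M u_h| ≤ C_B * ‖u - u_h‖ * ‖z - z_h‖ := by
  -- the path from u to u_h
  set γ : ℝ → V := fun θ => u + θ • (u_h - u) with hγ
  have hγcont : Continuous γ := by continuity
  have hderiv : ∀ θ ∈ Set.uIcc (0:ℝ) 1,
      HasDerivAt (fun t => M (γ t)) (fderiv ℝ M (γ θ) (u_h - u)) θ := by
    intro θ _
    have h1 : HasDerivAt γ (u_h - u) θ := by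
      have : HasDerivAt (fun t : ℝ => t • (u_h - u)) (u_h - u) θ := by
        simpa using (hasDerivAt_id θ).smul_const (u_h - u)
      simpa [hγ] using this.const_add u
    have h2 : HasFDerivAt M (fderiv ℝ M (γ θ)) (γ θ) :=
      (hM.differentiable one_ne_zero (γ θ)).hasFDerivAt
    exact h2.comp_hasDerivAt θ h1
  have hcontD : Continuous fun θ : ℝ => fderiv ℝ M (γ θ) (u_h - u) := by
    have := (hM.continuous_fderiv one_ne_zero).comp hγcont
    exact (ContinuousLinearMap.apply ℝ ℝ (u_h - u)).continuous.comp this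
  have hFTC : ∫ θ in (0:ℝ)..1, fderiv ℝ M (γ θ) (u_h - u) = M u_h - M u := by
    have := intervalIntegral.integral_eq_sub_of_hasDerivAt hderiv
      (hcontD.intervalIntegrable 0 1)
    simpa [hγ] using this
  have hkey : M u - M u_h = B (u - u_h) z := by
    rw [hdual (u - u_h)]
    have : (fun θ : ℝ => fderiv ℝ M (γ θ) (u - u_h))
        = fun θ : ℝ => -(fderiv ℝ M (γ θ) (u_h - u)) := by
      funext θ
      rw [← map_neg, neg_sub]
    rw [this, intervalIntegral.integral_neg, hFTC]
    ring
  have hzz : B (u - u_h) z = B (u - u_h) (z - z_h) := by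
    rw [(B (u - u_h)).map_sub, hGal z_h hz_h, sub_zero]
  rw [hkey, hzz]
  exact hB _ _
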